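/- Let r ≥ 0 be a natural number and b_1,…,b_{r+2} ∈ ℂ. Let M be the (2r+2)×(2r+2) complex matrix whose first r+2 rows are the Vandermonde rows (1, b_i, b_i², …, b_i^{2r+1}) for i = 1,…,r+2, and whose last r rows are the derivative rows (0, 1, 2b_i, 3b_i², …, (2r+1)b_i^{2r}) for i = 1,…,r. Then the determinant of M equals, up to a sign ε ∈ {+1, −1}, the product (b_{r+1} − b_{r+2}) · ∏_{1 ≤ i ≤ r, r+1 ≤ j ≤ r+2} (b_i − b_j)² · ∏_{1 ≤ i < j ≤ r} (b_i − b_j)⁴; that is, there exists ε ∈ {1, −1} with det M = ε · (b_{r+1} − b_{r+2}) · ∏_{1 ≤ i ≤ r, r+1 ≤ j ≤ r+2} (b_i − b_j)² · ∏_{1 ≤ i < j ≤ r} (b_i − b_j)⁴. -/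

import Mathlib

open Matrix Finset

/-- The confluent Vandermonde matrix: a `(2r+2) × (2r+2)` matrix whose first `r+2` rows
are the Vandermonde rows `(1, bᵢ, bᵢ², …, bᵢ^{2r+1})` for `i = 0,…,r+1`, and whose last
`r` rows are the derivative rows `(0, 1, 2bᵢ, …, (2r+1)bᵢ^{2r})` for `i = 0,…,r-1`. -/
def confluentVandermonde (r : ℕ) (b : Fin (r + 2) → ℂ) :
    Matrix (Fin (2 * r + 2)) (Fin (2 * r + 2)) ℂ :=
  Matrix.of fun i j =>
    if h : (i : ℕ) < r + 2 then b ⟨i, h⟩ ^ (j : ℕ)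
    else ((j : ℕ) : ℂ) * b ⟨(i : ℕ) - (r + 2), by have := i.isLt; omega⟩ ^ ((j : ℕ) - 1)

namespace CVAux
open Polynomial

variable (r : ℕ) (b : Fin (r + 2) → ℂ)

noncomputable def cc : ℕ → ℂ := fun p => if h : p < r + 2 then b ⟨p, h⟩ else 0

noncomputable def vv : Fin (2 * r + 2) → Polynomial ℂ := fun i =>
  if (i : ℕ) < r + 2 then C (cc r b i) else C (cc r b ((i : ℕ) - (r + 2))) + X

noncomputable def AA : Matrix (Fin (2 * r + 2)) (Fin (2 * r + 2)) (Polynomial ℂ) :=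
  Matrix.of fun i j =>
    if (i : ℕ) < r + 2 then C (cc r b i) ^ (j : ℕ)
    else ∑ m ∈ Finset.range (j : ℕ),
      (C (cc r b ((i : ℕ) - (r + 2))) + X) ^ m * C (cc r b ((i : ℕ) - (r + 2))) ^ ((j : ℕ) - 1 - m)

/-- intermediate matrices for the multilinearity argument -/
noncomputable def MM (s : Finset (Fin r)) : Matrix (Fin (2 * r + 2)) (Fin (2 * r + 2)) (Polynomial ℂ) :=
  Matrix.of fun i j =>
    if h : (i : ℕ) < r + 2 then C (cc r b i) ^ (j : ℕ)
    else if (⟨(i : ℕ) - (r + 2), by have := i.isLt; omega⟩ : Fin r) ∈ s then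
      (vv r b i) ^ (j : ℕ) - C (cc r b ((i : ℕ) - (r + 2))) ^ (j : ℕ)
    else (vv r b i) ^ (j : ℕ)

lemma det_MM (s : Finset (Fin r)) : (MM r b s).det = (vandermonde (vv r b)).det := by
  induction s using Finset.induction with
  | empty =>
    congr 1
    ext i j
    by_cases h : (i : ℕ) < r + 2 <;> simp [MM, vandermonde, vv, h]
  | @insert a s ha ih =>
    set ia : Fin (2 * r + 2) := ⟨r + 2 + (a : ℕ), by omega⟩ with hia
    have hianat : (ia : ℕ) = r + 2 + (a : ℕ) := rfl
    have hialt : ¬ ((ia : ℕ) < r + 2) := by omega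
    have hsub : (ia : ℕ) - (r + 2) = (a : ℕ) := by omega
    set u : Fin (2 * r + 2) → Polynomial ℂ := fun j => (vv r b ia) ^ (j : ℕ) with hu
    set w : Fin (2 * r + 2) → Polynomial ℂ := fun j => C (cc r b (a : ℕ)) ^ (j : ℕ) with hw
    have h1 : MM r b (insert a s) = updateRow (MM r b s) ia (u - w) := by
      ext i j
      by_cases hi : i = ia
      · subst hi
        rw [updateRow_self]
        simp only [MM, Matrix.of_apply, dif_neg hialt, hsub, Pi.sub_apply, hu, hw]
        rw [if_pos]
        simp [Fin.ext_iff, hsub]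
      · rw [updateRow_ne hi]
        simp only [MM, Matrix.of_apply]
        by_cases h : (i : ℕ) < r + 2
        · simp [h]
        · have hk : (⟨(i : ℕ) - (r + 2), by have := i.isLt; omega⟩ : Fin r) ≠ a := by
            intro hEq
            apply hi
            apply Fin.ext
            have : (i : ℕ) - (r + 2) = (a : ℕ) := by
              simpa [Fin.ext_iff] using hEq
            simp only [hianat]
            omega
          simp [h, hk]
    rw [h1, sub_eq_add_neg, det_updateRow_add]
    have h2 : updateRow (MM r b s) ia u = MM r b s := by
      have : u = MM r b s ia := by
        funext j
        simp [MM, hu, dif_neg hialt, hsub, ha]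
      rw [this, updateRow_eq_self]
    have h3 : (updateRow (MM r b s) ia (-w)).det = 0 := by
      have hne : (⟨(a : ℕ), by omega⟩ : Fin (2 * r + 2)) ≠ ia := by
        simp [Fin.ext_iff, hianat]
      have : ((-1 : Polynomial ℂ) • w) = -w := by funext j; simp
      rw [← this, det_updateRow_smul]
      have h0 : (updateRow (MM r b s) ia w).det = 0 := by
        apply det_zero_of_row_eq hne
        rw [updateRow_ne hne, updateRow_self]
        funext j
        have hal : (a : ℕ) < r + 2 := by have := a.isLt; omega
        simp [MM, hw, cc, hal]
      rw [h0, mul_zero]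
    rw [h2, h3, ih, add_zero]

lemma diag_mul_AA :
    (diagonal (fun i : Fin (2 * r + 2) => if (i : ℕ) < r + 2 then (1 : Polynomial ℂ) else X)
      * AA r b) = MM r b Finset.univ := by
  ext i j
  rw [diagonal_mul]
  by_cases h : (i : ℕ) < r + 2
  · simp [AA, MM, h]
  · simp only [if_neg h, AA, MM, Matrix.of_apply, dif_neg h, if_pos (Finset.mem_univ _)]
    have key := geom_sum₂_mul (C (cc r b ((i : ℕ) - (r + 2))) + X)
      (C (cc r b ((i : ℕ) - (r + 2)))) (j : ℕ)
    have hX : (C (cc r b ((i : ℕ) - (r + 2))) + X) - C (cc r b ((i : ℕ) - (r + 2))) = X := by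
      ring
    rw [hX] at key
    rw [vv, if_neg h, mul_comm, key]

lemma prod_diag : (∏ i : Fin (2 * r + 2),
    (if (i : ℕ) < r + 2 then (1 : Polynomial ℂ) else X)) = X ^ r := by
  rw [Fin.prod_univ_eq_prod_range (fun p => if p < r + 2 then (1 : Polynomial ℂ) else X)]
  rw [show 2 * r + 2 = (r + 2) + r by omega, Finset.prod_range_add]
  have h1 : (∏ x ∈ Finset.range (r + 2), (if x < r + 2 then (1 : Polynomial ℂ) else X)) = 1 := by
    apply Finset.prod_eq_one
    intro x hx
    rw [if_pos (Finset.mem_range.mp hx)]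
  have h2 : (∏ x ∈ Finset.range r, (if (r + 2) + x < r + 2 then (1 : Polynomial ℂ) else X)) = X ^ r := by
    rw [Finset.prod_congr rfl (fun x _ => by rw [if_neg (by omega)]), Finset.prod_const,
      Finset.card_range]
  rw [h1, h2, one_mul]

lemma Xr_det_AA : X ^ r * (AA r b).det = (vandermonde (vv r b)).det := by
  rw [← det_MM r b Finset.univ, ← diag_mul_AA, det_mul, det_diagonal, prod_diag]

/-- factored form of the vandermonde product -/
noncomputable def uu : Fin (2 * r + 2) → Fin (2 * r + 2) → Polynomial ℂ := fun i j =>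
  if (j : ℕ) = (i : ℕ) + (r + 2) then 1 else vv r b j - vv r b i

lemma vand_prod_factor :
    (∏ i : Fin (2 * r + 2), ∏ j ∈ Ioi i, (vv r b j - vv r b i))
      = X ^ r * ∏ i : Fin (2 * r + 2), ∏ j ∈ Ioi i, uu r b i j := by
  have hterm : ∀ i j : Fin (2 * r + 2), vv r b j - vv r b i
      = (if (j : ℕ) = (i : ℕ) + (r + 2) then X else 1) * uu r b i j := by
    intro i j
    by_cases hs : (j : ℕ) = (i : ℕ) + (r + 2)
    · rw [uu, if_pos hs, if_pos hs, mul_one]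
      have hj : ¬ ((j : ℕ) < r + 2) := by omega
      have hi : (i : ℕ) < r + 2 := by have := j.isLt; omega
      rw [vv, vv, if_neg hj, if_pos hi]
      have : (j : ℕ) - (r + 2) = (i : ℕ) := by omega
      rw [this]
      ring
    · rw [uu, if_neg hs, if_neg hs, one_mul]
  calc (∏ i : Fin (2 * r + 2), ∏ j ∈ Ioi i, (vv r b j - vv r b i))
      = ∏ i : Fin (2 * r + 2), ((∏ j ∈ Ioi i, (if (j : ℕ) = (i : ℕ) + (r + 2) then X else 1))
          * ∏ j ∈ Ioi i, uu r b i j) := by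
        apply Finset.prod_congr rfl
        intro i _
        rw [← Finset.prod_mul_distrib]
        exact Finset.prod_congr rfl fun j _ => hterm i j
    _ = (∏ i : Fin (2 * r + 2), ∏ j ∈ Ioi i, (if (j : ℕ) = (i : ℕ) + (r + 2) then X else 1))
          * ∏ i : Fin (2 * r + 2), ∏ j ∈ Ioi i, uu r b i j := Finset.prod_mul_distrib
    _ = X ^ r * ∏ i : Fin (2 * r + 2), ∏ j ∈ Ioi i, uu r b i j := by
        congr 1
        have hrow : ∀ i : Fin (2 * r + 2),
            (∏ j ∈ Ioi i, (if (j : ℕ) = (i : ℕ) + (r + 2) then (X : Polynomial ℂ) else 1))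
              = if (i : ℕ) < r then X else 1 := by
          intro i
          by_cases hi : (i : ℕ) < r
          · rw [if_pos hi]
            have hmem : (⟨(i : ℕ) + (r + 2), by omega⟩ : Fin (2 * r + 2)) ∈ Ioi i := by
              simp [Fin.lt_def]
            rw [Finset.prod_eq_single_of_mem _ hmem]
            · rw [if_pos rfl]
            · intro j _ hj
              rw [if_neg]
              intro hc
              exact hj (Fin.ext hc)
          · rw [if_neg hi]
            apply Finset.prod_eq_one
            intro j _
            rw [if_neg]
            have := j.isLt
            omega
        rw [Finset.prod_congr rfl fun i _ => hrow i]
        rw [Fin.prod_univ_eq_prod_range (fun p => if p < r then (X : Polynomial ℂ) else 1)]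
        rw [show 2 * r + 2 = r + (r + 2) by omega, Finset.prod_range_add]
        rw [Finset.prod_congr rfl (fun x hx => by rw [if_pos (Finset.mem_range.mp hx)]),
          Finset.prod_congr rfl (fun x (_ : x ∈ Finset.range (r+2)) => by rw [if_neg (by omega)]),
          Finset.prod_const, Finset.prod_const, Finset.card_range, one_pow, mul_one]

lemma det_AA_eq : (AA r b).det = ∏ i : Fin (2 * r + 2), ∏ j ∈ Ioi i, uu r b i j := by
  have h := Xr_det_AA r b
  rw [det_vandermonde, vand_prod_factor] at h
  exact mul_left_cancel₀ (pow_ne_zero r X_ne_zero) h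

noncomputable def gam : ℕ → ℂ := fun p => if p < r + 2 then cc r b p else cc r b (p - (r + 2))

noncomputable def ww : ℕ → ℕ → ℂ := fun i j =>
  if j = i + (r + 2) then 1 else gam r b j - gam r b i

lemma eval0_vv (i : Fin (2 * r + 2)) : eval 0 (vv r b i) = gam r b (i : ℕ) := by
  rw [vv, gam, apply_ite (eval 0)]
  simp

lemma eval0_uu (i j : Fin (2 * r + 2)) : eval 0 (uu r b i j) = ww r b (i : ℕ) (j : ℕ) := by
  rw [uu, ww, apply_ite (eval 0)]
  simp [eval0_vv]

lemma map_AA : (evalRingHom (0 : ℂ)).mapMatrix (AA r b) = confluentVandermonde r b := by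
  ext i j
  simp only [RingHom.mapMatrix_apply, Matrix.map_apply, confluentVandermonde, Matrix.of_apply]
  rw [coe_evalRingHom]
  by_cases h : (i : ℕ) < r + 2
  · rw [AA, Matrix.of_apply, if_pos h, dif_pos h]
    simp [cc, h]
  · rw [AA, Matrix.of_apply, if_neg h, dif_neg h]
    have hsub : (i : ℕ) - (r + 2) < r + 2 := by have := i.isLt; omega
    rw [Polynomial.eval_finset_sum]
    have hterm : ∀ m ∈ Finset.range (j : ℕ),
        eval 0 ((C (cc r b ((i : ℕ) - (r + 2))) + X) ^ m
          * C (cc r b ((i : ℕ) - (r + 2))) ^ ((j : ℕ) - 1 - m))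
        = cc r b ((i : ℕ) - (r + 2)) ^ ((j : ℕ) - 1) := by
      intro m hm
      rw [Finset.mem_range] at hm
      simp only [eval_mul, eval_pow, eval_add, eval_C, eval_X, add_zero]
      rw [← pow_add]
      congr 1
      omega
    rw [Finset.sum_congr rfl hterm, Finset.sum_const, Finset.card_range, nsmul_eq_mul]
    congr 1
    simp [cc, hsub]

lemma det_confluent_eq :
    (confluentVandermonde r b).det
      = ∏ i ∈ Finset.range (2 * r + 2), ∏ j ∈ Finset.range (2 * r + 2),
          (if i < j then ww r b i j else 1) := by
  have h1 : (confluentVandermonde r b).det = eval 0 (AA r b).det := by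
    rw [← map_AA, ← RingHom.map_det]
    rfl
  rw [h1, det_AA_eq, Polynomial.eval_prod]
  have h2 : ∀ i : Fin (2 * r + 2), eval 0 (∏ j ∈ Ioi i, uu r b i j)
      = ∏ j ∈ Finset.range (2 * r + 2), (if (i : ℕ) < j then ww r b (i : ℕ) j else 1) := by
    intro i
    rw [Polynomial.eval_prod]
    have : (∏ j ∈ Ioi i, eval 0 (uu r b i j))
        = ∏ j : Fin (2 * r + 2), (if (i : ℕ) < (j : ℕ) then ww r b (i : ℕ) (j : ℕ) else 1) := by
      rw [← Finset.prod_filter]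
      apply Finset.prod_congr
      · ext j
        simp only [Finset.mem_filter, Finset.mem_univ, true_and, Finset.mem_Ioi, Fin.lt_def]
      · intro j hj
        exact eval0_uu r b i j
    rw [this, Fin.prod_univ_eq_prod_range (fun p => if (i : ℕ) < p then ww r b (i : ℕ) p else 1)]
  rw [Finset.prod_congr rfl fun i _ => h2 i,
    Fin.prod_univ_eq_prod_range (fun p => ∏ j ∈ Finset.range (2 * r + 2),
      (if p < j then ww r b p j else 1))]

lemma P_eq :
    (∏ i ∈ Finset.range (2 * r + 2), ∏ j ∈ Finset.range (2 * r + 2),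
        (if i < j then ww r b i j else 1))
    = (∏ i ∈ Finset.range (r + 2), ∏ j ∈ Finset.range (r + 2),
          (if i < j then cc r b j - cc r b i else 1))
      * (∏ i ∈ Finset.range (r + 2), ∏ k ∈ Finset.range r,
          (if k = i then 1 else cc r b k - cc r b i))
      * (∏ k ∈ Finset.range r, ∏ l ∈ Finset.range r,
          (if k < l then cc r b l - cc r b k else 1)) := by
  rw [show 2 * r + 2 = (r + 2) + r by omega, Finset.prod_range_add]
  have hF : ∀ i ∈ Finset.range (r + 2),
      (∏ j ∈ Finset.range ((r + 2) + r), if i < j then ww r b i j else 1)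
      = (∏ j ∈ Finset.range (r + 2), if i < j then cc r b j - cc r b i else 1)
        * (∏ k ∈ Finset.range r, if k = i then 1 else cc r b k - cc r b i) := by
    intro i hi
    rw [Finset.mem_range] at hi
    rw [Finset.prod_range_add]
    congr 1
    · apply Finset.prod_congr rfl
      intro j hj
      rw [Finset.mem_range] at hj
      by_cases hij : i < j
      · rw [if_pos hij, if_pos hij, ww, if_neg (by omega), gam, if_pos hj, gam, if_pos (by omega)]
      · rw [if_neg hij, if_neg hij]
    · apply Finset.prod_congr rfl
      intro k hk
      rw [Finset.mem_range] at hk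
      rw [if_pos (by omega), ww]
      by_cases hik : k = i
      · rw [if_pos (by omega), if_pos hik]
      · rw [if_neg (by omega), if_neg hik, gam, if_neg (by omega), gam, if_pos (by omega)]
        have : r + 2 + k - (r + 2) = k := by omega
        rw [this]
  have hG : ∀ x ∈ Finset.range r,
      (∏ j ∈ Finset.range ((r + 2) + r), if (r + 2) + x < j then ww r b ((r + 2) + x) j else 1)
      = ∏ l ∈ Finset.range r, if x < l then cc r b l - cc r b x else 1 := by
    intro x hx
    rw [Finset.mem_range] at hx
    rw [Finset.prod_range_add]
    have h1 : (∏ j ∈ Finset.range (r + 2),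
        if (r + 2) + x < j then ww r b ((r + 2) + x) j else 1) = 1 :=
      Finset.prod_eq_one fun j hj => by
        rw [Finset.mem_range] at hj; rw [if_neg (by omega)]
    rw [h1, one_mul]
    apply Finset.prod_congr rfl
    intro l hl
    rw [Finset.mem_range] at hl
    by_cases hxl : x < l
    · rw [if_pos (by omega), if_pos hxl, ww, if_neg (by omega), gam, if_neg (by omega),
        gam, if_neg (by omega)]
      have e1 : r + 2 + l - (r + 2) = l := by omega
      have e2 : r + 2 + x - (r + 2) = x := by omega
      rw [e1, e2]
    · rw [if_neg (by omega), if_neg hxl]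
  rw [Finset.prod_congr rfl hF, Finset.prod_congr rfl hG, Finset.prod_mul_distrib, mul_assoc]

lemma double_succ (g : ℕ → ℕ → ℂ) (n : ℕ) :
    (∏ i ∈ Finset.range (n + 1), ∏ j ∈ Finset.range (n + 1), g i j)
    = (∏ i ∈ Finset.range n, ∏ j ∈ Finset.range n, g i j) * (∏ i ∈ Finset.range n, g i n)
      * (∏ j ∈ Finset.range n, g n j) * g n n := by
  rw [Finset.prod_range_succ, Finset.prod_congr rfl fun i _ => Finset.prod_range_succ (g i) n,
    Finset.prod_range_succ (g n) n, Finset.prod_mul_distrib]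
  ring

lemma offdiag_sq (f : ℕ → ℂ) (n : ℕ) :
    (∏ i ∈ Finset.range n, ∏ j ∈ Finset.range n, if j = i then 1 else (f j - f i) ^ 2)
    = (∏ i ∈ Finset.range n, ∏ j ∈ Finset.range n,
        if i < j then (f j - f i) ^ 2 else 1) ^ 2 := by
  induction n with
  | zero => simp
  | succ n ih =>
    rw [double_succ, double_succ, ih]
    have h1 : (∏ i ∈ Finset.range n, if n = i then 1 else (f n - f i) ^ 2)
        = ∏ i ∈ Finset.range n, (f n - f i) ^ 2 :=
      Finset.prod_congr rfl fun i hi => by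
        rw [Finset.mem_range] at hi; rw [if_neg (by omega)]
    have h2 : (∏ j ∈ Finset.range n, if j = n then 1 else (f j - f n) ^ 2)
        = ∏ j ∈ Finset.range n, (f n - f j) ^ 2 :=
      Finset.prod_congr rfl fun j hj => by
        rw [Finset.mem_range] at hj; rw [if_neg (by omega)]; ring
    have h3 : (∏ i ∈ Finset.range n, if i < n then (f n - f i) ^ 2 else 1)
        = ∏ i ∈ Finset.range n, (f n - f i) ^ 2 :=
      Finset.prod_congr rfl fun i hi => by
        rw [Finset.mem_range] at hi; rw [if_pos hi]
    have h4 : (∏ j ∈ Finset.range n, if n < j then (f j - f n) ^ 2 else 1) = 1 :=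
      Finset.prod_eq_one fun j hj => by
        rw [Finset.mem_range] at hj; rw [if_neg (by omega)]
    rw [h1, h2, h3, h4, if_pos rfl, if_neg (lt_irrefl n)]
    ring

lemma sq_ite_prod (s t : Finset ℕ) (p : ℕ → ℕ → Prop) [∀ i j, Decidable (p i j)]
    (f : ℕ → ℕ → ℂ) :
    (∏ i ∈ s, ∏ j ∈ t, if p i j then f i j else 1) ^ 2
      = ∏ i ∈ s, ∏ j ∈ t, if p i j then (f i j) ^ 2 else 1 := by
  rw [← Finset.prod_pow]
  refine Finset.prod_congr rfl fun i _ => ?_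
  rw [← Finset.prod_pow]
  refine Finset.prod_congr rfl fun j _ => ?_
  rw [apply_ite (· ^ 2), one_pow]

lemma sq_ite_prod' (s t : Finset ℕ) (p : ℕ → ℕ → Prop) [∀ i j, Decidable (p i j)]
    (f : ℕ → ℕ → ℂ) :
    (∏ i ∈ s, ∏ j ∈ t, if p i j then 1 else f i j) ^ 2
      = ∏ i ∈ s, ∏ j ∈ t, if p i j then 1 else (f i j) ^ 2 := by
  rw [← Finset.prod_pow]
  refine Finset.prod_congr rfl fun i _ => ?_
  rw [← Finset.prod_pow]
  refine Finset.prod_congr rfl fun j _ => ?_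
  rw [apply_ite (· ^ 2), one_pow]

lemma key_sq :
    (∏ i ∈ Finset.range (2 * r + 2), ∏ j ∈ Finset.range (2 * r + 2),
        (if i < j then ww r b i j else 1)) ^ 2
    = ((cc r b r - cc r b (r + 1))
        * (∏ i ∈ Finset.range r, (cc r b i - cc r b r) ^ 2 * (cc r b i - cc r b (r + 1)) ^ 2)
        * (∏ i ∈ Finset.range r, ∏ j ∈ Finset.range r,
            (if i < j then (cc r b i - cc r b j) ^ 4 else 1))) ^ 2 := by
  rw [P_eq]
  set c := cc r b with hc
  set Q := ∏ i ∈ Finset.range r, ∏ j ∈ Finset.range r,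
      (if i < j then (c j - c i) ^ 2 else 1) with hQdef
  set Ar := ∏ i ∈ Finset.range r, (c i - c r) ^ 2 with hAr
  set Ar1 := ∏ i ∈ Finset.range r, (c i - c (r + 1)) ^ 2 with hAr1
  -- B1 squared
  have hB1 : (∏ i ∈ Finset.range (r + 2), ∏ j ∈ Finset.range (r + 2),
      (if i < j then c j - c i else 1)) ^ 2
      = Q * Ar * Ar1 * (c r - c (r + 1)) ^ 2 := by
    rw [sq_ite_prod]
    have e : r + 2 = (r + 1) + 1 := rfl
    rw [e, double_succ, show r + 1 = r + 1 from rfl]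
    rw [double_succ]
    have g1 : (∏ i ∈ Finset.range (r + 1), if i < r + 1 then (c (r + 1) - c i) ^ 2 else 1)
        = Ar1 * (c r - c (r + 1)) ^ 2 := by
      rw [Finset.prod_congr rfl fun i hi => if_pos (Finset.mem_range.mp hi),
        Finset.prod_range_succ, hAr1]
      congr 1
      · exact Finset.prod_congr rfl fun i _ => by ring
      · ring
    have g2 : (∏ j ∈ Finset.range (r + 1), if r + 1 < j then (c j - c (r + 1)) ^ 2 else 1) = 1 :=
      Finset.prod_eq_one fun j hj => by
        rw [Finset.mem_range] at hj; rw [if_neg (by omega)]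
    have g3 : (∏ i ∈ Finset.range r, if i < r then (c r - c i) ^ 2 else 1) = Ar := by
      rw [Finset.prod_congr rfl fun i hi => if_pos (Finset.mem_range.mp hi), hAr]
      exact Finset.prod_congr rfl fun i _ => by ring
    have g4 : (∏ j ∈ Finset.range r, if r < j then (c j - c r) ^ 2 else 1) = 1 :=
      Finset.prod_eq_one fun j hj => by
        rw [Finset.mem_range] at hj; rw [if_neg (by omega)]
    rw [g1, g2, g3, g4, if_neg (lt_irrefl (r + 1)), if_neg (lt_irrefl r)]
    ring
  -- B2 squared
  have hB2 : (∏ i ∈ Finset.range (r + 2), ∏ k ∈ Finset.range r,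
      (if k = i then 1 else c k - c i)) ^ 2 = Q ^ 2 * Ar * Ar1 := by
    rw [sq_ite_prod']
    have e : r + 2 = (r + 1) + 1 := rfl
    rw [e, Finset.prod_range_succ, Finset.prod_range_succ]
    have g1 : (∏ i ∈ Finset.range r, ∏ k ∈ Finset.range r,
        (if k = i then 1 else (c k - c i) ^ 2)) = Q ^ 2 := by
      rw [hQdef]
      exact offdiag_sq c r
    have g2 : (∏ k ∈ Finset.range r, if k = r then 1 else (c k - c r) ^ 2) = Ar := by
      rw [Finset.prod_congr rfl fun k hk => if_neg (by have := Finset.mem_range.mp hk; omega)]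
    have g3 : (∏ k ∈ Finset.range r, if k = r + 1 then 1 else (c k - c (r + 1)) ^ 2) = Ar1 := by
      rw [Finset.prod_congr rfl fun k hk => if_neg (by have := Finset.mem_range.mp hk; omega)]
    rw [g1, g2, g3]
  -- B4 squared
  have hB4 : (∏ k ∈ Finset.range r, ∏ l ∈ Finset.range r,
      (if k < l then c l - c k else 1)) ^ 2 = Q := by
    rw [sq_ite_prod, hQdef]
  -- RHS
  have hRHS : ((c r - c (r + 1))
      * (∏ i ∈ Finset.range r, (c i - c r) ^ 2 * (c i - c (r + 1)) ^ 2)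
      * (∏ i ∈ Finset.range r, ∏ j ∈ Finset.range r,
          (if i < j then (c i - c j) ^ 4 else 1))) ^ 2
      = (c r - c (r + 1)) ^ 2 * (Ar * Ar1) ^ 2 * Q ^ 4 := by
    have g1 : (∏ i ∈ Finset.range r, (c i - c r) ^ 2 * (c i - c (r + 1)) ^ 2) = Ar * Ar1 := by
      rw [Finset.prod_mul_distrib, hAr, hAr1]
    have g2 : (∏ i ∈ Finset.range r, ∏ j ∈ Finset.range r,
        (if i < j then (c i - c j) ^ 4 else 1)) = Q ^ 2 := by
      have : ∀ i j : ℕ, (c i - c j) ^ 4 = ((c j - c i) ^ 2) ^ 2 := fun i j => by ring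
      rw [Finset.prod_congr rfl fun i _ => Finset.prod_congr rfl fun j _ => by rw [this i j]]
      rw [← sq_ite_prod, hQdef]
    rw [g1, g2]
    ring
  rw [mul_pow, mul_pow, hB1, hB2, hB4, hRHS]
  ring

lemma t_eq :
    (cc r b r - cc r b (r + 1))
      * (∏ i ∈ Finset.range r, (cc r b i - cc r b r) ^ 2 * (cc r b i - cc r b (r + 1)) ^ 2)
      * (∏ i ∈ Finset.range r, ∏ j ∈ Finset.range r,
          (if i < j then (cc r b i - cc r b j) ^ 4 else 1))
    = (b ⟨r, Nat.lt_add_of_pos_right two_pos⟩ - b ⟨r + 1, Nat.add_lt_add_left one_lt_two r⟩)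
        * (∏ i : Fin r,
            ((b (Fin.castLE (Nat.le_add_right r 2) i) - b ⟨r, Nat.lt_add_of_pos_right two_pos⟩) ^ 2
              * (b (Fin.castLE (Nat.le_add_right r 2) i) - b ⟨r + 1, Nat.add_lt_add_left one_lt_two r⟩) ^ 2))
        * (∏ i : Fin r, ∏ j : Fin r,
            if i < j then
              (b (Fin.castLE (Nat.le_add_right r 2) i) - b (Fin.castLE (Nat.le_add_right r 2) j)) ^ 4
            else 1) := by
  have hc : ∀ p, p < r + 2 → ∀ (h : p < r + 2), cc r b p = b ⟨p, h⟩ := fun p _ h => dif_pos h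
  congr 1
  · congr 1
    · rw [hc r (by omega) (by omega), hc (r + 1) (by omega) (by omega)]
    · rw [← Fin.prod_univ_eq_prod_range
        (fun p => (cc r b p - cc r b r) ^ 2 * (cc r b p - cc r b (r + 1)) ^ 2)]
      refine Finset.prod_congr rfl fun i _ => ?_
      rw [hc (i : ℕ) (by omega) (by omega), hc r (by omega) (by omega),
        hc (r + 1) (by omega) (by omega)]
      rfl
  · rw [← Fin.prod_univ_eq_prod_range
      (fun p => ∏ j ∈ Finset.range r, (if p < j then (cc r b p - cc r b j) ^ 4 else 1))]
    refine Finset.prod_congr rfl fun i _ => ?_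
    rw [← Fin.prod_univ_eq_prod_range
      (fun q => if (i : ℕ) < q then (cc r b (i : ℕ) - cc r b q) ^ 4 else 1)]
    refine Finset.prod_congr rfl fun j _ => ?_
    by_cases hij : i < j
    · rw [if_pos (by exact hij), if_pos hij,
        hc (i : ℕ) (by omega) (by omega), hc (j : ℕ) (by omega) (by omega)]
      rfl
    · rw [if_neg (by exact hij), if_neg hij]

end CVAux

/-- Lemma on generalized Vandermonde determinants: up to a sign, the determinant of the
confluent Vandermonde matrix equals
`(b_{r} − b_{r+1}) · ∏_{i<r, j∈{r,r+1}} (bᵢ − bⱼ)² · ∏_{i<j<r} (bᵢ − bⱼ)⁴`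
(indices `0`-based). -/
theorem confluentVandermonde_det (r : ℕ) (b : Fin (r + 2) → ℂ) :
    ∃ ε : ℂ, (ε = 1 ∨ ε = -1) ∧
      (confluentVandermonde r b).det =
        ε * (b ⟨r, by omega⟩ - b ⟨r + 1, by omega⟩)
          * (∏ i : Fin r,
              ((b (Fin.castLE (by omega) i) - b ⟨r, by omega⟩) ^ 2
                * (b (Fin.castLE (by omega) i) - b ⟨r + 1, by omega⟩) ^ 2))
          * (∏ i : Fin r, ∏ j : Fin r,
              if i < j then
                (b (Fin.castLE (by omega) i) - b (Fin.castLE (by omega) j)) ^ 4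
              else 1) := by
  have hsq : ((confluentVandermonde r b).det) ^ 2
      = ((b ⟨r, by omega⟩ - b ⟨r + 1, by omega⟩)
          * (∏ i : Fin r,
              ((b (Fin.castLE (by omega) i) - b ⟨r, by omega⟩) ^ 2
                * (b (Fin.castLE (by omega) i) - b ⟨r + 1, by omega⟩) ^ 2))
          * (∏ i : Fin r, ∏ j : Fin r,
              if i < j then
                (b (Fin.castLE (by omega) i) - b (Fin.castLE (by omega) j)) ^ 4
              else 1)) ^ 2 := by
    rw [CVAux.det_confluent_eq, CVAux.key_sq, CVAux.t_eq]
  rcases sq_eq_sq_iff_eq_or_eq_neg.mp hsq with h | h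
  · exact ⟨1, Or.inl rfl, by rw [h]; ring⟩
  · exact ⟨-1, Or.inr rfl, by rw [h]; ring⟩
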